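/- Let f : 𝔹ⁿ → ℝⁿ be a map such that C := sup over x ∈ 𝔹ⁿ of the Euclidean diameter of f(B_ρ(x, 1)) is finite, where B_ρ denotes a hyperbolic ball. Then the maximum modulus M(r, f) = sup_{|x| = r} |f(x)| satisfies M(r, f) ≤ |f(0)| + C·max{1, log((1+r)/(1−r))} for all r ∈ (0,1). In particular M(r,f) ≤ R_f · max{1, log((1+r)/(1−r))} where R_f = |f(0)| + C. -/

import Mathlib

open Metric Set

/-- The length of a path `γ : [0,1] → ℝⁿ` with respect to a conformal density `τ`. -/
noncomputable def pathLength {n : ℕ} (τ : EuclideanSpace ℝ (Fin n) → ℝ)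
    (γ : ℝ → EuclideanSpace ℝ (Fin n)) : ℝ :=
  ∫ t in (0:ℝ)..1, τ (γ t) * ‖deriv γ t‖

/-- The distance induced on a domain `Y ⊆ ℝⁿ` by a conformal density `τ`. -/
noncomputable def conformalDist {n : ℕ} (τ : EuclideanSpace ℝ (Fin n) → ℝ)
    (Y : Set (EuclideanSpace ℝ (Fin n))) (u v : EuclideanSpace ℝ (Fin n)) : ℝ :=
  sInf {l : ℝ | ∃ γ : ℝ → EuclideanSpace ℝ (Fin n), ContDiff ℝ 1 γ ∧
    γ 0 = u ∧ γ 1 = v ∧ (∀ t ∈ Icc (0:ℝ) 1, γ t ∈ Y) ∧ l = pathLength τ γ}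

/-- The hyperbolic distance on the unit ball `𝔹ⁿ`. -/
noncomputable def hypDist {n : ℕ} (u v : EuclideanSpace ℝ (Fin n)) : ℝ :=
  conformalDist (fun x => 2 / (1 - ‖x‖ ^ 2)) (ball (0 : EuclideanSpace ℝ (Fin n)) 1) u v

lemma hypDist_segment_le {n : ℕ} (e : EuclideanSpace ℝ (Fin n)) (he : ‖e‖ = 1)
    (s t : ℝ) (hs0 : 0 ≤ s) (hs1 : s < 1) (ht0 : 0 ≤ t) (ht1 : t < 1) :
    hypDist (s • e) (t • e) ≤
      |Real.log ((1 + t) / (1 - t)) - Real.log ((1 + s) / (1 - s))| := by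
  set g : ℝ → ℝ := fun τ => s + τ * (t - s) with hg_def
  set γ : ℝ → EuclideanSpace ℝ (Fin n) := fun τ => g τ • e with hγ_def
  have hgd : ∀ τ : ℝ, HasDerivAt g (t - s) τ := fun τ => by
    exact (((hasDerivAt_id τ).mul_const (t - s)).const_add s).congr_deriv (one_mul _)
  have hγd : ∀ τ : ℝ, HasDerivAt γ ((t - s) • e) τ := fun τ => (hgd τ).smul_const e
  have hγderiv : ∀ τ : ℝ, deriv γ τ = (t - s) • e := fun τ => (hγd τ).deriv
  have hgmem : ∀ τ ∈ Icc (0:ℝ) 1, 0 ≤ g τ ∧ g τ < 1 := by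
    intro τ hτ
    obtain ⟨h0, h1⟩ := hτ
    constructor
    · simp only [hg_def]
      rcases le_total s t with hst | hst
      · nlinarith [mul_nonneg h0 (sub_nonneg.2 hst)]
      · nlinarith [mul_nonneg (sub_nonneg.2 h1) (sub_nonneg.2 hst)]
    · simp only [hg_def]
      rcases le_total s t with hst | hst
      · nlinarith [mul_nonneg (sub_nonneg.2 h1) (sub_nonneg.2 hst)]
      · nlinarith [mul_nonneg h0 (sub_nonneg.2 hst)]
  have hmem : ∀ τ ∈ Icc (0:ℝ) 1, γ τ ∈ ball (0 : EuclideanSpace ℝ (Fin n)) 1 := by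
    intro τ hτ
    obtain ⟨h0, h1⟩ := hgmem τ hτ
    simp only [hγ_def, mem_ball_zero_iff, norm_smul, he, mul_one, Real.norm_eq_abs,
      abs_of_nonneg h0]
    exact h1
  have hcd : ContDiff ℝ 1 γ :=
    ((contDiff_const.add (contDiff_id.mul contDiff_const)).smul contDiff_const)
  -- bounded below by 0
  have hbdd : BddBelow {l : ℝ | ∃ γ : ℝ → EuclideanSpace ℝ (Fin n), ContDiff ℝ 1 γ ∧
      γ 0 = s • e ∧ γ 1 = t • e ∧
      (∀ τ ∈ Icc (0:ℝ) 1, γ τ ∈ ball (0 : EuclideanSpace ℝ (Fin n)) 1) ∧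
      l = pathLength (fun x => 2 / (1 - ‖x‖ ^ 2)) γ} := by
    refine ⟨0, ?_⟩
    rintro l ⟨σ, -, -, -, hσmem, rfl⟩
    apply intervalIntegral.integral_nonneg (by norm_num)
    intro τ hτ
    have hσ : ‖σ τ‖ < 1 := by
      have := hσmem τ hτ; rwa [mem_ball_zero_iff] at this
    have : (0:ℝ) < 1 - ‖σ τ‖ ^ 2 := by nlinarith [norm_nonneg (σ τ)]
    exact mul_nonneg (by positivity) (norm_nonneg _)
  have hmem_set : pathLength (fun x => 2 / (1 - ‖x‖ ^ 2)) γ ∈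
      {l : ℝ | ∃ γ : ℝ → EuclideanSpace ℝ (Fin n), ContDiff ℝ 1 γ ∧
      γ 0 = s • e ∧ γ 1 = t • e ∧
      (∀ τ ∈ Icc (0:ℝ) 1, γ τ ∈ ball (0 : EuclideanSpace ℝ (Fin n)) 1) ∧
      l = pathLength (fun x => 2 / (1 - ‖x‖ ^ 2)) γ} := by
    refine ⟨γ, hcd, ?_, ?_, hmem, rfl⟩
    · simp [hγ_def, hg_def]
    · simp [hγ_def, hg_def]
  have hle : hypDist (s • e) (t • e) ≤ pathLength (fun x => 2 / (1 - ‖x‖ ^ 2)) γ :=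
    csInf_le hbdd hmem_set
  refine hle.trans ?_
  -- compute the path length
  have hF : ∀ τ ∈ uIcc (0:ℝ) 1,
      HasDerivAt (fun τ => Real.log (1 + g τ) - Real.log (1 - g τ))
        ((t - s) * (2 / (1 - g τ ^ 2))) τ := by
    intro τ hτ
    rw [uIcc_of_le (by norm_num : (0:ℝ) ≤ 1)] at hτ
    obtain ⟨h0, h1⟩ := hgmem τ hτ
    have hp : (0:ℝ) < 1 + g τ := by linarith
    have hq : (0:ℝ) < 1 - g τ := by linarith
    have h1' : HasDerivAt (fun τ => Real.log (1 + g τ)) ((t - s) / (1 + g τ)) τ :=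
      (((hgd τ).const_add 1).log hp.ne')
    have h2' : HasDerivAt (fun τ => Real.log (1 - g τ)) ((-(t - s)) / (1 - g τ)) τ := by
      have := ((hgd τ).const_sub 1).log hq.ne'
      convert this using 1
    have := h1'.sub h2'
    refine this.congr_deriv ?_
    rw [show (1:ℝ) - g τ ^ 2 = (1 + g τ) * (1 - g τ) by ring]
    field_simp
    ring
  have hcont : ContinuousOn (fun τ => (t - s) * (2 / (1 - g τ ^ 2))) (uIcc (0:ℝ) 1) := by
    rw [uIcc_of_le (by norm_num : (0:ℝ) ≤ 1)]
    apply ContinuousOn.mul continuousOn_const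
    apply ContinuousOn.div continuousOn_const
    · exact ((continuous_const.sub ((continuous_const.add
        ((continuous_id.mul continuous_const))).pow 2))).continuousOn
    · intro τ hτ
      obtain ⟨h0, h1⟩ := hgmem τ hτ
      nlinarith
  have hint : IntervalIntegrable (fun τ => (t - s) * (2 / (1 - g τ ^ 2)))
      MeasureTheory.volume 0 1 := hcont.intervalIntegrable
  have hftc : ∫ τ in (0:ℝ)..1, (t - s) * (2 / (1 - g τ ^ 2)) =
      (Real.log (1 + g 1) - Real.log (1 - g 1)) -
      (Real.log (1 + g 0) - Real.log (1 - g 0)) :=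
    intervalIntegral.integral_eq_sub_of_hasDerivAt hF hint
  have hg0 : g 0 = s := by simp [hg_def]
  have hg1 : g 1 = t := by simp [hg_def]
  have hAt : Real.log ((1 + t) / (1 - t)) = Real.log (1 + t) - Real.log (1 - t) :=
    Real.log_div (by linarith) (by linarith)
  have hAs : Real.log ((1 + s) / (1 - s)) = Real.log (1 + s) - Real.log (1 - s) :=
    Real.log_div (by linarith) (by linarith)
  have hplen : pathLength (fun x => 2 / (1 - ‖x‖ ^ 2)) γ =
      ∫ τ in (0:ℝ)..1, (2 / (1 - g τ ^ 2)) * |t - s| := by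
    unfold pathLength
    congr 1
    funext τ
    rw [hγderiv τ]
    simp only [hγ_def, norm_smul, he, mul_one, Real.norm_eq_abs, sq_abs]
  rw [hplen]
  rcases le_total s t with h | h
  · have habs : |t - s| = t - s := abs_of_nonneg (by linarith)
    have : ∫ τ in (0:ℝ)..1, (2 / (1 - g τ ^ 2)) * |t - s| =
        ∫ τ in (0:ℝ)..1, (t - s) * (2 / (1 - g τ ^ 2)) := by
      congr 1; funext τ; rw [habs]; ring
    rw [this, hftc, hg0, hg1, ← hAt, ← hAs]
    exact le_abs_self _
  · have habs : |t - s| = -(t - s) := abs_of_nonpos (by linarith)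
    have : ∫ τ in (0:ℝ)..1, (2 / (1 - g τ ^ 2)) * |t - s| =
        ∫ τ in (0:ℝ)..1, -((t - s) * (2 / (1 - g τ ^ 2))) := by
      congr 1; funext τ; rw [habs]; ring
    rw [this, intervalIntegral.integral_neg, hftc, hg0, hg1, ← hAt, ← hAs, neg_sub,
      abs_sub_comm]
    exact le_abs_self _

lemma aux_c (a : ℝ) (ha : 0 ≤ a) :
    0 ≤ (Real.exp a - 1) / (Real.exp a + 1) ∧ (Real.exp a - 1) / (Real.exp a + 1) < 1 ∧
    Real.log ((1 + (Real.exp a - 1) / (Real.exp a + 1)) /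
      (1 - (Real.exp a - 1) / (Real.exp a + 1))) = a := by
  have hE : 1 ≤ Real.exp a := Real.one_le_exp ha
  have hE0 : (0:ℝ) < Real.exp a + 1 := by linarith
  refine ⟨div_nonneg (by linarith) hE0.le, (div_lt_one hE0).2 (by linarith), ?_⟩
  have h1 : (1 + (Real.exp a - 1) / (Real.exp a + 1)) /
      (1 - (Real.exp a - 1) / (Real.exp a + 1)) = Real.exp a := by
    rw [div_eq_iff]
    · field_simp
      ring
    · intro h
      rw [sub_eq_zero, eq_comm, div_eq_one_iff_eq hE0.ne'] at h
      linarith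
  rw [h1, Real.log_exp]

theorem stmt_12_aux {n : ℕ}
    (f : EuclideanSpace ℝ (Fin n) → EuclideanSpace ℝ (Fin n))
    (C : ℝ) (hC : 0 ≤ C)
    (hdiam : ∀ x ∈ ball (0 : EuclideanSpace ℝ (Fin n)) 1,
      ∀ u ∈ ball (0 : EuclideanSpace ℝ (Fin n)) 1,
      ∀ v ∈ ball (0 : EuclideanSpace ℝ (Fin n)) 1,
        hypDist x u < 1 → hypDist x v < 1 → ‖f u - f v‖ ≤ C) :
    ∀ r : ℝ, 0 < r → r < 1 → ∀ x : EuclideanSpace ℝ (Fin n), ‖x‖ = r →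
      ‖f x‖ ≤ ‖f 0‖ + C * max 1 (Real.log ((1 + r) / (1 - r))) ∧
      ‖f x‖ ≤ (‖f 0‖ + C) * max 1 (Real.log ((1 + r) / (1 - r))) := by
  intro r hr0 hr1 x hx
  set L : ℝ := Real.log ((1 + r) / (1 - r)) with hL_def
  have h1r : (0:ℝ) < 1 - r := by linarith
  have hL : 0 < L := Real.log_pos ((one_lt_div h1r).2 (by linarith))
  set N : ℕ := ⌊L / 2⌋₊ + 1 with hN_def
  have hNpos : (0:ℝ) < N := by positivity
  have hL2N : L / 2 < N := by
    have := Nat.lt_floor_add_one (L / 2)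
    rw [hN_def]; push_cast; linarith
  set h : ℝ := L / (2 * N) with hh_def
  have hh0 : 0 < h := by positivity
  have hh1 : h < 1 := by
    rw [hh_def, div_lt_one (by positivity)]
    linarith
  -- the radial points
  set d : ℕ → ℝ := fun j => (Real.exp (j * h) - 1) / (Real.exp (j * h) + 1) with hd_def
  have hd : ∀ j : ℕ, 0 ≤ d j ∧ d j < 1 ∧ Real.log ((1 + d j) / (1 - d j)) = j * h :=
    fun j => aux_c (j * h) (by positivity)
  -- unit vector
  have hrne : r ≠ 0 := hr0.ne'
  set e : EuclideanSpace ℝ (Fin n) := r⁻¹ • x with he_def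
  have he : ‖e‖ = 1 := by
    rw [he_def, norm_smul, hx, Real.norm_eq_abs, abs_of_pos (by positivity)]
    field_simp
  have hmem : ∀ j : ℕ, d j • e ∈ ball (0 : EuclideanSpace ℝ (Fin n)) 1 := by
    intro j
    rw [mem_ball_zero_iff, norm_smul, he, mul_one, Real.norm_eq_abs,
      abs_of_nonneg (hd j).1]
    exact (hd j).2.1
  -- the chain step
  have hstep : ∀ k : ℕ, ‖f (d (2 * k + 2) • e) - f (d (2 * k) • e)‖ ≤ C := by
    intro k
    have hdist : ∀ j j' : ℕ, (j : ℝ) ≤ j' → (j' : ℝ) - j ≤ 1 →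
        hypDist (d j • e) (d j' • e) < 1 := by
      intro j j' hle hdiff
      have := hypDist_segment_le e he (d j) (d j') (hd j).1 (hd j).2.1 (hd j').1 (hd j').2.1
      refine lt_of_le_of_lt this ?_
      rw [(hd j).2.2, (hd j').2.2]
      rw [abs_of_nonneg (by nlinarith)]
      nlinarith
    have h1 : hypDist (d (2 * k + 1) • e) (d (2 * k) • e) < 1 := by
      have := hdist (2 * k) (2 * k + 1) (by push_cast; linarith) (by push_cast; linarith)
      -- need symmetric direction: use the lemma directly
      have h2 := hypDist_segment_le e he (d (2 * k + 1)) (d (2 * k))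
        (hd _).1 (hd _).2.1 (hd _).1 (hd _).2.1
      refine lt_of_le_of_lt h2 ?_
      rw [(hd (2 * k)).2.2, (hd (2 * k + 1)).2.2]
      push_cast
      rw [abs_of_nonpos (by nlinarith)]
      nlinarith
    have h2 : hypDist (d (2 * k + 1) • e) (d (2 * k + 2) • e) < 1 :=
      hdist (2 * k + 1) (2 * k + 2) (by push_cast; linarith) (by push_cast; linarith)
    have := hdiam (d (2 * k + 1) • e) (hmem _) (d (2 * k) • e) (hmem _)
      (d (2 * k + 2) • e) (hmem _) h1 h2
    rw [norm_sub_rev] at this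
    exact this
  -- induction
  have hd0 : d 0 = 0 := by simp [hd_def]
  have key : ∀ k : ℕ, ‖f (d (2 * k) • e) - f 0‖ ≤ k * C := by
    intro k
    induction k with
    | zero => simp [hd0]
    | succ k ih =>
      have heq : 2 * (k + 1) = 2 * k + 2 := by ring
      rw [heq]
      calc ‖f (d (2 * k + 2) • e) - f 0‖
          ≤ ‖f (d (2 * k + 2) • e) - f (d (2 * k) • e)‖ + ‖f (d (2 * k) • e) - f 0‖ :=
            norm_sub_le_norm_sub_add_norm_sub _ _ _
        _ ≤ C + k * C := add_le_add (hstep k) ih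
        _ = (k + 1 : ℕ) * C := by push_cast; ring
  -- endpoint
  have hend : d (2 * N) = r := by
    have h2NL : ((2 * N : ℕ) : ℝ) * h = L := by
      push_cast
      rw [hh_def]
      field_simp
    rw [hd_def]
    simp only
    rw [h2NL, hL_def, Real.exp_log (by positivity)]
    rw [div_eq_iff]
    · field_simp
      ring
    · intro hcon
      have : (1 + r) / (1 - r) = -1 := by linarith
      nlinarith [div_pos (by linarith : (0:ℝ) < 1 + r) h1r]
  have hxe : d (2 * N) • e = x := by
    rw [hend, he_def, smul_smul, mul_inv_cancel₀ hrne, one_smul]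
  have hfx : ‖f x - f 0‖ ≤ N * C := by
    have := key N
    rwa [hxe] at this
  -- N ≤ max 1 L
  have hNle : (N : ℝ) ≤ max 1 L := by
    rcases lt_or_ge L 2 with hL2 | hL2
    · have : ⌊L / 2⌋₊ = 0 := Nat.floor_eq_zero.2 (by linarith)
      rw [hN_def, this]
      simp
    · have hfl : (⌊L / 2⌋₊ : ℝ) ≤ L / 2 := Nat.floor_le (by positivity)
      have : (N : ℝ) ≤ L / 2 + 1 := by rw [hN_def]; push_cast; linarith
      refine le_trans this (le_trans (by linarith) (le_max_right 1 L))
  have hmax1 : (1:ℝ) ≤ max 1 L := le_max_left 1 L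
  have hbound : ‖f x‖ ≤ ‖f 0‖ + C * max 1 L := by
    have h1 : ‖f x‖ - ‖f 0‖ ≤ ‖f x - f 0‖ := norm_sub_norm_le _ _
    have h2 : (N : ℝ) * C ≤ C * max 1 L := by
      rw [mul_comm]
      exact mul_le_mul_of_nonneg_left hNle hC
    linarith
  refine ⟨hbound, ?_⟩
  have : ‖f 0‖ + C * max 1 L ≤ (‖f 0‖ + C) * max 1 L := by
    nlinarith [norm_nonneg (f 0)]
  linarith

/-- If the image under `f : 𝔹ⁿ → ℝⁿ` of every hyperbolic ball of
radius `1` has Euclidean diameter at most `C`, then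
`M(r,f) ≤ |f 0| + C max {1, log((1+r)/(1-r))}`, and hence
`M(r,f) ≤ R_f·max {1, log((1+r)/(1-r))}` with `R_f = |f 0| + C`. -/
theorem stmt_12 {n : ℕ}
    (f : EuclideanSpace ℝ (Fin n) → EuclideanSpace ℝ (Fin n))
    (C : ℝ) (hC : 0 ≤ C)
    (hdiam : ∀ x ∈ ball (0 : EuclideanSpace ℝ (Fin n)) 1,
      ∀ u ∈ ball (0 : EuclideanSpace ℝ (Fin n)) 1,
      ∀ v ∈ ball (0 : EuclideanSpace ℝ (Fin n)) 1,
        hypDist x u < 1 → hypDist x v < 1 → ‖f u - f v‖ ≤ C) :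
    ∀ r : ℝ, 0 < r → r < 1 → ∀ x : EuclideanSpace ℝ (Fin n), ‖x‖ = r →
      ‖f x‖ ≤ ‖f 0‖ + C * max 1 (Real.log ((1 + r) / (1 - r))) ∧
      ‖f x‖ ≤ (‖f 0‖ + C) * max 1 (Real.log ((1 + r) / (1 - r))) := by
  exact stmt_12_aux f C hC hdiam
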